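/- The elementary orthogonal matrices satisfy the commutator relation oe_{i,j}(ab) = [oe_{i,k}(a), oe_{k,j}(b)] when i, j, k, σ(i), σ(j), σ(k) are pairwise distinct. -/

import Mathlib

open Matrix

variable {R : Type*} [CommRing R] {r : ℕ}

/-- The involution σ on {1,…,2r} (0-based: pairs (2i, 2i+1) are swapped),
i.e. σ(2i) = 2i−1 and σ(2i−1) = 2i in the paper's 1-based indexing. -/
def sig (k : Fin (2*r)) : Fin (2*r) :=
  ⟨if k.1 % 2 = 0 then k.1 + 1 else k.1 - 1, by have := k.isLt; split <;> omega⟩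

/-- The elementary orthogonal generator oe_{i,j}(z) = I + z·e_{i,j} − z·e_{σ(j),σ(i)}. -/
def oe (i j : Fin (2*r)) (z : R) : Matrix (Fin (2*r)) (Fin (2*r)) R :=
  1 + single i j z - single (sig j) (sig i) z

lemma sig_sig (k : Fin (2*r)) : sig (sig k) = k := by
  have := k.isLt
  simp only [sig]
  ext
  dsimp
  split <;> split <;> omega

lemma sig_ne_self (k : Fin (2*r)) : sig k ≠ k := by
  have := k.isLt
  simp only [sig, Fin.ne_iff_vne]
  dsimp
  split <;> omega

lemma sig_inj {a b : Fin (2*r)} (h : sig a = sig b) : a = b := by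
  rw [← sig_sig a, h, sig_sig]

lemma ne_sig_symm {a b : Fin (2*r)} (h : a ≠ sig b) : b ≠ sig a :=
  fun hh => h (by rw [hh, sig_sig])

lemma std_mul (i j k l : Fin (2*r)) (c d : R) :
    single i j c * single k l d =
      if j = k then single i l (c*d) else 0 := by
  by_cases h : j = k
  · subst h; rw [if_pos rfl]; exact single_mul_single_same (c := c) i j l d
  · rw [if_neg h]; exact single_mul_single_of_ne (c := c) i j k h d

lemma std_neg (i j : Fin (2*r)) (c : R) :
    single i j (-c) = -single i j c := by
  exact (single_neg i j c).symm

lemma oe_mul_neg (i j : Fin (2*r)) (z : R) (h1 : i ≠ j) (h2 : i ≠ sig j) :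
    oe i j z * oe i j (-z) = 1 := by
  have h3 : j ≠ i := h1.symm
  have h4 : j ≠ sig j := (sig_ne_self j).symm
  have h5 : sig i ≠ i := sig_ne_self i
  have h6 : sig i ≠ sig j := fun h => h1 (sig_inj h)
  simp only [oe, mul_add, add_mul, mul_sub, sub_mul, one_mul, mul_one, std_mul,
    if_neg h3, if_neg h4, if_neg h5, if_neg h6]
  simp only [std_neg, mul_neg, neg_mul, neg_neg]
  abel

theorem oe_commutator (i j k : Fin (2*r)) (a b : R)
    (hij : i ≠ j) (hijs : i ≠ sig j)
    (hik : i ≠ k) (hiks : i ≠ sig k)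
    (hjk : j ≠ k) (hjks : j ≠ sig k) :
    oe i j (a * b) = oe i k a * oe k j b * (oe i k a)⁻¹ * (oe k j b)⁻¹ := by
  have hkj : k ≠ j := hjk.symm
  have hkjs : k ≠ sig j := ne_sig_symm hjks
  have hA := oe_mul_neg i k a hik hiks
  have hB := oe_mul_neg k j b hkj hkjs
  rw [Matrix.inv_eq_right_inv hA, Matrix.inv_eq_right_inv hB]
  have e1 : k ≠ i := hik.symm
  have e2 : k ≠ sig k := (sig_ne_self k).symm
  have e3 : k ≠ sig i := ne_sig_symm hiks
  have e4 : j ≠ i := hij.symm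
  have e5 : j ≠ sig j := (sig_ne_self j).symm
  have e6 : j ≠ sig i := ne_sig_symm hijs
  have e7 : sig i ≠ i := sig_ne_self i
  have e8 : sig i ≠ k := fun h => e3 h.symm
  have e9 : sig i ≠ sig k := fun h => hik (sig_inj h)
  have e10 : sig i ≠ sig j := fun h => hij (sig_inj h)
  have e11 : sig k ≠ i := fun h => hiks h.symm
  have e12 : sig k ≠ k := sig_ne_self k
  have e13 : sig k ≠ sig j := fun h => hjk (sig_inj h).symm
  have e14 : sig j ≠ i := fun h => hijs h.symm
  have e15 : sig j ≠ k := fun h => hkjs h.symm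
  have e16 : sig j ≠ j := sig_ne_self j
  simp only [oe, mul_add, add_mul, mul_sub, sub_mul, one_mul, mul_one, std_mul,
    if_neg hij, if_neg hik, if_neg hjk, if_neg hkj, if_neg e1, if_neg e2, if_neg e3,
    if_neg e4, if_neg e5, if_neg e6, if_neg e7, if_neg e8, if_neg e9, if_neg e10,
    if_neg e11, if_neg e12, if_neg e13, if_neg e14, if_neg e15, if_neg e16,
    if_neg hijs, if_neg hiks, if_neg hjks, if_neg hkjs,
    if_pos rfl, eq_self_iff_true, if_true, zero_mul, mul_zero, add_zero, zero_add, sub_zero, zero_sub, neg_neg,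
    mul_neg, neg_mul, std_neg, sub_neg_eq_add]
  simp only [std_mul, if_neg hij, if_neg hik, if_neg hjk, if_neg hkj, if_neg e1, if_neg e2,
    if_neg e3, if_neg e4, if_neg e5, if_neg e6, if_neg e7, if_neg e8, if_neg e9, if_neg e10,
    if_neg e11, if_neg e12, if_neg e13, if_neg e14, if_neg e15, if_neg e16,
    if_neg hijs, if_neg hiks, if_neg hjks, if_neg hkjs, if_pos rfl, eq_self_iff_true, if_true,
    zero_mul, mul_zero, add_zero, zero_add, mul_neg, neg_mul, neg_neg, std_neg, mul_comm b a]
  abel
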